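/- Let k, n be natural numbers and let g be a homeomorphism of ℝ^k × ℝ^n satisfying (g p).1 = p.1 for every p (g preserves the first coordinate). For t ∈ ℝ define g^t : ℝ^k × ℝ^n → ℝ^k × ℝ^n by g^t(x, y) = (x, (g (t • x, y)).2). Then: (1) for every t, g^t is a homeomorphism, with inverse (x, y) ↦ (x, (g⁻¹ (t • x, y)).2); (2) g^1 = g; (3) each g^t preserves the first coordinate; and (4) the map (t, x, y) ↦ g^t(x, y) from ℝ × (ℝ^k × ℝ^n) to ℝ^k × ℝ^n is jointly continuous. (This is the Alexander trick deforming g to the product homeomorphism g^0(x, y) = (x, (g (0, y)).2).) -/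

import Mathlib

/-- Euclidean space `ℝ^k`. -/
noncomputable abbrev Euc (k : ℕ) := EuclideanSpace ℝ (Fin k)

/-- The Alexander trick: for a homeomorphism `g` of `ℝ^k × ℝ^n` preserving the first
coordinate, the maps `g^t(x, y) = (x, (g (t • x, y)).2)` satisfy:
(1) each `g^t` is a homeomorphism with inverse `(x, y) ↦ (x, (g⁻¹ (t • x, y)).2)`;
(2) `g^1 = g`;
(3) each `g^t` preserves the first coordinate;
(4) `(t, x, y) ↦ g^t(x, y)` is jointly continuous. -/
theorem alexander_trick (k n : ℕ)
    (g : (Euc k × Euc n) ≃ₜ (Euc k × Euc n))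
    (hg : ∀ p : Euc k × Euc n, (g p).1 = p.1) :
    (∀ t : ℝ, ∃ h : (Euc k × Euc n) ≃ₜ (Euc k × Euc n),
      (⇑h = fun p : Euc k × Euc n => (p.1, (g (t • p.1, p.2)).2)) ∧
      (⇑h.symm = fun p : Euc k × Euc n => (p.1, (g.symm (t • p.1, p.2)).2))) ∧
    ((fun p : Euc k × Euc n => (p.1, (g ((1 : ℝ) • p.1, p.2)).2)) = ⇑g) ∧
    (∀ (t : ℝ) (p : Euc k × Euc n),
      ((p.1, (g (t • p.1, p.2)).2) : Euc k × Euc n).1 = p.1) ∧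
    Continuous (fun q : ℝ × (Euc k × Euc n) =>
      ((q.2.1, (g (q.1 • q.2.1, q.2.2)).2) : Euc k × Euc n)) := by
  have hg' : ∀ p : Euc k × Euc n, (g.symm p).1 = p.1 := by
    intro p
    conv_rhs => rw [← g.apply_symm_apply p]
    exact (hg _).symm
  have hgpair : ∀ p : Euc k × Euc n, g p = (p.1, (g p).2) := by
    intro p; exact Prod.ext (hg p) rfl
  have hgpair' : ∀ p : Euc k × Euc n, g.symm p = (p.1, (g.symm p).2) := by
    intro p; exact Prod.ext (hg' p) rfl
  refine ⟨?_, ?_, fun t p => rfl, ?_⟩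
  · intro t
    refine ⟨⟨⟨fun p => (p.1, (g (t • p.1, p.2)).2),
        fun p => (p.1, (g.symm (t • p.1, p.2)).2), ?_, ?_⟩, ?_, ?_⟩, rfl, rfl⟩
    · intro p
      simp only
      have : ((t • p.1, (g (t • p.1, p.2)).2) : Euc k × Euc n) = g (t • p.1, p.2) := by
        rw [hgpair (t • p.1, p.2)]
      rw [this, g.symm_apply_apply]
    · intro p
      simp only
      have : ((t • p.1, (g.symm (t • p.1, p.2)).2) : Euc k × Euc n) = g.symm (t • p.1, p.2) := by
        rw [hgpair' (t • p.1, p.2)]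
      rw [this, g.apply_symm_apply]
    · exact continuous_fst.prodMk ((g.continuous.comp
        (((continuous_const (y := t)).smul continuous_fst).prodMk continuous_snd)).snd)
    · exact continuous_fst.prodMk ((g.symm.continuous.comp
        (((continuous_const (y := t)).smul continuous_fst).prodMk continuous_snd)).snd)
  · funext p
    rw [one_smul]
    exact (hgpair p).symm
  · exact (continuous_fst.comp continuous_snd).prodMk
      ((g.continuous.comp ((continuous_fst.smul (continuous_fst.comp continuous_snd)).prodMk
        (continuous_snd.comp continuous_snd))).snd)
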